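/- Value table for the Petersson cocycle: ω(g,h) = 1 if sign(c_g(−d_g)) = sign(c_h(−d_h)) = 1 and sign(c_{gh}(−d_{gh})) = −1; ω(g,h) = −1 if sign(c_g(−d_g)) = sign(c_h(−d_h)) = −1 and sign(c_{gh}(−d_{gh})) = 1; and ω(g,h) = 0 in all other cases. -/

import Mathlib

open Matrix UpperHalfPlane Complex

abbrev SL2R := Matrix.SpecialLinearGroup (Fin 2) ℝ

/-- The automorphy factor `j(g,z) = cz + d`. -/
noncomputable def jFac (g : SL2R) (z : ℂ) : ℂ :=
  (g.1 1 0 : ℝ) * z + (g.1 1 1 : ℝ)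

/-- Petersson's 2-cocycle
`ω(g,h) = (1/(2πi))(Log j(g, h·z) + Log j(h,z) − Log j(gh,z))`. -/
noncomputable def omegaC (g h : SL2R) (z : ℍ) : ℂ :=
  (1 / (2 * Real.pi * Complex.I)) *
    (Complex.log (jFac g ((h • z : ℍ) : ℂ)) + Complex.log (jFac h (z : ℂ))
      - Complex.log (jFac (g * h) (z : ℂ)))

/-- `c(−d)`: equal to `c` if `c ≠ 0` and to `−d` if `c = 0`, for the bottom row `(c,d)`. -/
noncomputable def cStar (g : SL2R) : ℝ :=
  if g.1 1 0 ≠ 0 then g.1 1 0 else -g.1 1 1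

lemma bottom_ne (g : SL2R) (hc : g.1 1 0 = 0) : g.1 1 1 ≠ 0 := by
  have hd := g.2
  rw [Matrix.det_fin_two] at hd
  intro h0
  rw [hc, h0] at hd
  simp at hd

lemma cStar_ne (g : SL2R) : cStar g ≠ 0 := by
  unfold cStar
  split_ifs with hc
  · exact hc
  · push_neg at hc
    simpa using bottom_ne g hc

lemma jFac_ne_zero (g : SL2R) (w : ℍ) : jFac g (w : ℂ) ≠ 0 := by
  have h := UpperHalfPlane.linear_ne_zero (cd := ![g.1 1 0, g.1 1 1]) w ?_
  · simpa [jFac] using h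
  · intro hcd
    have hc : g.1 1 0 = 0 := by
      have := congrFun hcd 0; simpa using this
    have hd : g.1 1 1 = 0 := by
      have := congrFun hcd 1; simpa using this
    exact bottom_ne g hc hd

lemma jFac_im (g : SL2R) (w : ℍ) : (jFac g (w : ℂ)).im = g.1 1 0 * w.im := by
  simp [jFac, UpperHalfPlane.coe_im]

lemma arg_Ioc_pos (g : SL2R) (w : ℍ) (hs : Real.sign (cStar g) = 1) :
    (jFac g (w : ℂ)).arg ∈ Set.Ioc 0 Real.pi := by
  have hpos : 0 < cStar g := by
    rcases lt_trichotomy (cStar g) 0 with h | h | h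
    · rw [Real.sign_of_neg h] at hs; norm_num at hs
    · exact absurd h (cStar_ne g)
    · exact h
  by_cases hc : g.1 1 0 ≠ 0
  · have hcpos : 0 < g.1 1 0 := by rwa [cStar, if_pos hc] at hpos
    have him : 0 < (jFac g (w : ℂ)).im := by
      rw [jFac_im]; exact mul_pos hcpos w.im_pos
    constructor
    · rcases lt_or_eq_of_le (Complex.arg_nonneg_iff.mpr him.le) with h | h
      · exact h
      · exfalso
        have := (Complex.arg_eq_zero_iff.mp h.symm).2
        exact him.ne' this
    · exact Complex.arg_le_pi _
  · push_neg at hc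
    have hd : g.1 1 1 < 0 := by
      rw [cStar, if_neg (by simpa using hc)] at hpos; linarith
    have : jFac g (w : ℂ) = ((g.1 1 1 : ℝ) : ℂ) := by simp [jFac, hc]
    rw [this, Complex.arg_ofReal_of_neg hd]
    exact ⟨Real.pi_pos, le_rfl⟩

lemma arg_Ioc_neg (g : SL2R) (w : ℍ) (hs : Real.sign (cStar g) = -1) :
    (jFac g (w : ℂ)).arg ∈ Set.Ioc (-Real.pi) 0 := by
  have hneg : cStar g < 0 := by
    rcases lt_trichotomy (cStar g) 0 with h | h | h
    · exact h
    · exact absurd h (cStar_ne g)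
    · rw [Real.sign_of_pos h] at hs; norm_num at hs
  by_cases hc : g.1 1 0 ≠ 0
  · have hcneg : g.1 1 0 < 0 := by rwa [cStar, if_pos hc] at hneg
    have him : (jFac g (w : ℂ)).im < 0 := by
      rw [jFac_im]; exact mul_neg_of_neg_of_pos hcneg w.im_pos
    exact ⟨Complex.neg_pi_lt_arg _, le_of_lt (Complex.arg_neg_iff.mpr him)⟩
  · push_neg at hc
    have hd : 0 < g.1 1 1 := by
      rw [cStar, if_neg (by simpa using hc)] at hneg; linarith
    have : jFac g (w : ℂ) = ((g.1 1 1 : ℝ) : ℂ) := by simp [jFac, hc]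
    rw [this, Complex.arg_ofReal_of_nonneg hd.le]
    exact ⟨by linarith [Real.pi_pos], le_rfl⟩

lemma jFac_cocycle (g h : SL2R) (z : ℍ) :
    jFac (g * h) (z : ℂ) = jFac g ((h • z : ℍ) : ℂ) * jFac h (z : ℂ) := by
  have hne : jFac h (z : ℂ) ≠ 0 := jFac_ne_zero h z
  have hc : ((h • z : ℍ) : ℂ) =
      ((h.1 0 0 : ℝ) * (z : ℂ) + (h.1 0 1 : ℝ)) / ((h.1 1 0 : ℝ) * (z : ℂ) + (h.1 1 1 : ℝ)) := by
    rw [UpperHalfPlane.specialLinearGroup_apply]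
    simp
  unfold jFac at hne ⊢
  rw [hc]
  simp only [Matrix.SpecialLinearGroup.coe_mul, Matrix.mul_apply, Fin.sum_univ_two]
  field_simp
  push_cast
  have hne2 : (z:ℂ) * (h.1 1 0 : ℝ) + (h.1 1 1 : ℝ) ≠ 0 := by rwa [mul_comm]
  field_simp
  ring

lemma log_sum (a b : ℂ) (ha : a ≠ 0) (hb : b ≠ 0) :
    Complex.log a + Complex.log b - Complex.log (a * b)
      = ((a.arg + b.arg - (a * b).arg : ℝ) : ℂ) * Complex.I := by
  unfold Complex.log
  rw [norm_mul, Real.log_mul (norm_ne_zero_iff.mpr ha) (norm_ne_zero_iff.mpr hb)]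
  push_cast
  ring

lemma ex_k (a b : ℂ) (ha : a ≠ 0) (hb : b ≠ 0) :
    ∃ k : ℤ, a.arg + b.arg - (a * b).arg = 2 * Real.pi * k := by
  have h := Complex.arg_mul_coe_angle ha hb
  rw [← Real.Angle.coe_add, eq_comm, Real.Angle.angle_eq_iff_two_pi_dvd_sub] at h
  exact h

lemma k_eq {d : ℝ} {k n : ℤ} (hk : d = 2 * Real.pi * k)
    (h1 : (2 * (n : ℝ) - 2) * Real.pi < d) (h2 : d < (2 * (n : ℝ) + 2) * Real.pi) : k = n := by
  have hπ := Real.pi_pos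
  rw [hk] at h1 h2
  have e : 2 * Real.pi * (k : ℝ) = (2 * (k : ℝ)) * Real.pi := by ring
  rw [e] at h1 h2
  have a1 := (mul_lt_mul_iff_of_pos_right hπ).mp h1
  have a2 := (mul_lt_mul_iff_of_pos_right hπ).mp h2
  have b1 : 2 * n - 2 < 2 * k := by exact_mod_cast a1
  have b2 : 2 * k < 2 * n + 2 := by exact_mod_cast a2
  omega

lemma sign_cases (g : SL2R) : Real.sign (cStar g) = 1 ∨ Real.sign (cStar g) = -1 := by
  rcases lt_trichotomy (cStar g) 0 with h | h | h
  · exact Or.inr (Real.sign_of_neg h)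
  · exact absurd h (cStar_ne g)
  · exact Or.inl (Real.sign_of_pos h)

lemma omegaC_eq_k (g h : SL2R) (z : ℍ) {k : ℤ}
    (hk : (jFac g ((h • z : ℍ) : ℂ)).arg + (jFac h (z : ℂ)).arg
        - (jFac g ((h • z : ℍ) : ℂ) * jFac h (z : ℂ)).arg = 2 * Real.pi * k) :
    omegaC g h z = (k : ℂ) := by
  unfold omegaC
  rw [jFac_cocycle, log_sum _ _ (jFac_ne_zero g (h • z)) (jFac_ne_zero h z), hk]
  have hπ : (Real.pi : ℂ) ≠ 0 := by exact_mod_cast Real.pi_ne_zero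
  have hI := Complex.I_ne_zero
  push_cast
  field_simp

/-- Value table for the Petersson cocycle. -/
theorem omegaC_values (g h : SL2R) (z : ℍ) :
    (Real.sign (cStar g) = 1 ∧ Real.sign (cStar h) = 1 ∧ Real.sign (cStar (g * h)) = -1
        → omegaC g h z = 1) ∧
    (Real.sign (cStar g) = -1 ∧ Real.sign (cStar h) = -1 ∧ Real.sign (cStar (g * h)) = 1
        → omegaC g h z = -1) ∧
    (¬ (Real.sign (cStar g) = 1 ∧ Real.sign (cStar h) = 1 ∧ Real.sign (cStar (g * h)) = -1) ∧
     ¬ (Real.sign (cStar g) = -1 ∧ Real.sign (cStar h) = -1 ∧ Real.sign (cStar (g * h)) = 1)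
        → omegaC g h z = 0) := by
  have ha : jFac g ((h • z : ℍ) : ℂ) ≠ 0 := jFac_ne_zero g (h • z)
  have hb : jFac h (z : ℂ) ≠ 0 := jFac_ne_zero h z
  obtain ⟨k, hk⟩ := ex_k _ _ ha hb
  have hargab : (jFac g ((h • z : ℍ) : ℂ) * jFac h (z : ℂ)).arg = (jFac (g * h) (z : ℂ)).arg := by
    rw [← jFac_cocycle]
  have hπ := Real.pi_pos
  have hω : ∀ n : ℤ, k = n → omegaC g h z = (n : ℂ) := by
    rintro n rfl; exact omegaC_eq_k g h z hk
  refine ⟨?_, ?_, ?_⟩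
  · rintro ⟨h1, h2, h3⟩
    obtain ⟨mA1, mA2⟩ := arg_Ioc_pos g (h • z) h1
    obtain ⟨mB1, mB2⟩ := arg_Ioc_pos h z h2
    obtain ⟨mC1, mC2⟩ := arg_Ioc_neg (g * h) z h3
    rw [← hargab] at mC1 mC2
    have hk1 : k = 1 := k_eq hk (by push_cast; linarith) (by push_cast; linarith)
    simpa using hω 1 hk1
  · rintro ⟨h1, h2, h3⟩
    obtain ⟨mA1, mA2⟩ := arg_Ioc_neg g (h • z) h1
    obtain ⟨mB1, mB2⟩ := arg_Ioc_neg h z h2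
    obtain ⟨mC1, mC2⟩ := arg_Ioc_pos (g * h) z h3
    rw [← hargab] at mC1 mC2
    have hk1 : k = -1 := k_eq hk (by push_cast; linarith) (by push_cast; linarith)
    simpa using hω (-1) hk1
  · rintro ⟨hn1, hn2⟩
    have hk2 : (jFac g ((h • z : ℍ) : ℂ)).arg + (jFac h (z : ℂ)).arg
        - (jFac (g * h) (z : ℂ)).arg = 2 * Real.pi * k := by rw [← hargab]; exact hk
    have bA : ((jFac g ((h • z : ℍ) : ℂ)).arg ∈ Set.Ioc 0 Real.pi ∧ Real.sign (cStar g) = 1)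
        ∨ ((jFac g ((h • z : ℍ) : ℂ)).arg ∈ Set.Ioc (-Real.pi) 0 ∧ Real.sign (cStar g) = -1) := by
      rcases sign_cases g with s | s
      · exact Or.inl ⟨arg_Ioc_pos g (h • z) s, s⟩
      · exact Or.inr ⟨arg_Ioc_neg g (h • z) s, s⟩
    have bB : ((jFac h (z : ℂ)).arg ∈ Set.Ioc 0 Real.pi ∧ Real.sign (cStar h) = 1)
        ∨ ((jFac h (z : ℂ)).arg ∈ Set.Ioc (-Real.pi) 0 ∧ Real.sign (cStar h) = -1) := by
      rcases sign_cases h with s | s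
      · exact Or.inl ⟨arg_Ioc_pos h z s, s⟩
      · exact Or.inr ⟨arg_Ioc_neg h z s, s⟩
    have bC : ((jFac (g * h) (z : ℂ)).arg ∈ Set.Ioc 0 Real.pi ∧ Real.sign (cStar (g * h)) = 1)
        ∨ ((jFac (g * h) (z : ℂ)).arg ∈ Set.Ioc (-Real.pi) 0
            ∧ Real.sign (cStar (g * h)) = -1) := by
      rcases sign_cases (g * h) with s | s
      · exact Or.inl ⟨arg_Ioc_pos (g * h) z s, s⟩
      · exact Or.inr ⟨arg_Ioc_neg (g * h) z s, s⟩
    rcases bA with ⟨mA, sg⟩ | ⟨mA, sg⟩ <;> rcases bB with ⟨mB, sh⟩ | ⟨mB, sh⟩ <;>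
      rcases bC with ⟨mC, sgh⟩ | ⟨mC, sgh⟩
    all_goals try exact absurd (And.intro sg (And.intro sh sgh)) hn1
    all_goals try exact absurd (And.intro sg (And.intro sh sgh)) hn2
    all_goals
      have hk0 : k = 0 := k_eq hk2
          (by push_cast; linarith [mA.1, mA.2, mB.1, mB.2, mC.1, mC.2, hπ])
          (by push_cast; linarith [mA.1, mA.2, mB.1, mB.2, mC.1, mC.2, hπ])
    all_goals simpa using hω 0 hk0
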